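/- Let ε ∈ (0,1), a ∈ ℝ, and define u(z) = ε²/(z-(1+ε)e^{ia})³ for z in the unit disc 𝔻. Then for every θ with |θ - a| ≤ π one has ∫₀¹ |u(re^{iθ})| dr ≤ min{1, 8ε²/|θ-a|²}. -/

import Mathlib

open Set

/-- The point `r e^{iθ}` of the complex plane. -/
noncomputable def circ (r θ : ℝ) : ℂ := r * Complex.exp (θ * Complex.I)

lemma linpos {p q a b r : ℝ} (ha : 0 < p - q*a) (hb : 0 < p - q*b) (hr : r ∈ Set.uIcc a b) :
    0 < p - q*r := by
  rw [Set.mem_uIcc] at hr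
  rcases le_total q 0 with h|h <;> rcases hr with ⟨h1,h2⟩|⟨h1,h2⟩ <;> nlinarith

lemma ftc3 {p q a b : ℝ} (hq : q ≠ 0) (ha : 0 < p - q*a) (hb : 0 < p - q*b) :
    ∫ r in a..b, ((p - q*r)^3)⁻¹ = (2*q)⁻¹ * (((p - q*b)^2)⁻¹ - ((p - q*a)^2)⁻¹) := by
  have hderiv : ∀ r ∈ Set.uIcc a b,
      HasDerivAt (fun x => (2*q)⁻¹ * ((p - q*x)^2)⁻¹) (((p - q*r)^3)⁻¹) r := by
    intro r hr
    have h0 : 0 < p - q*r := linpos ha hb hr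
    have h1 : HasDerivAt (fun x : ℝ => p - q*x) (-q) r := by
      simpa using ((hasDerivAt_id r).const_mul q).const_sub p
    have h2 : HasDerivAt (fun x : ℝ => (p - q*x)^2) (2*(p - q*r)^1*(-q)) r := by
      simpa using h1.fun_pow 2
    have h3 : HasDerivAt (fun y => (2 * q)⁻¹ * ((p - q * y) ^ 2)⁻¹)
        ((2 * q)⁻¹ * (-(2 * (p - q * r) ^ 1 * -q) / ((p - q * r) ^ 2) ^ 2)) r :=
      (h2.fun_inv (pow_ne_zero 2 h0.ne')).const_mul ((2*q)⁻¹)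
    convert h3 using 1
    field_simp
  have hcont : ContinuousOn (fun r => ((p - q*r)^3)⁻¹) (Set.uIcc a b) := by
    apply ContinuousOn.inv₀ (by fun_prop)
    intro r hr
    exact pow_ne_zero 3 (linpos ha hb hr).ne'
  rw [intervalIntegral.integral_eq_sub_of_hasDerivAt hderiv (hcont.intervalIntegrable)]
  ring

lemma intInt3 {p q a b : ℝ} (ha : 0 < p - q*a) (hb : 0 < p - q*b) (c : ℝ) :
    IntervalIntegrable (fun r => c * ((p - q*r)^3)⁻¹) MeasureTheory.volume a b := by
  apply ContinuousOn.intervalIntegrable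
  apply ContinuousOn.mul continuousOn_const
  apply ContinuousOn.inv₀ (by fun_prop)
  intro r hr
  exact pow_ne_zero 3 (linpos ha hb hr).ne'

set_option maxHeartbeats 2000000 in
/-- Let `ε ∈ (0,1)`, `a ∈ ℝ`, `u(z) = ε²/(z-(1+ε)e^{ia})³`. Then for every
`θ` with `|θ-a| ≤ π`, `∫₀¹ |u(re^{iθ})| dr ≤ min{1, 8ε²/|θ-a|²}` (the second bound being
relevant only when `θ ≠ a`). -/
theorem stmt17 (ε : ℝ) (hε : ε ∈ Ioo (0:ℝ) 1) (a : ℝ)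
    (u : ℂ → ℂ)
    (hu : u = fun z => (ε:ℂ)^2 / (z - (1+ε) * Complex.exp (a * Complex.I))^3)
    (θ : ℝ) (hθ : |θ - a| ≤ Real.pi) :
    (∫ r in (0:ℝ)..1, ‖u (circ r θ)‖) ≤ 1 ∧
      (θ ≠ a → (∫ r in (0:ℝ)..1, ‖u (circ r θ)‖) ≤ 8*ε^2/|θ - a|^2) := by
  obtain ⟨hε0, hε1⟩ := hε
  set s : ℝ := θ - a with hs
  set w : ℂ := (1+(ε:ℂ)) * Complex.exp (a * Complex.I) with hw
  set F : ℝ → ℝ := fun r => ‖u (circ r θ)‖ with hF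
  -- norm formula
  have hnorm : ∀ r : ℝ, F r = ε^2 / ‖circ r θ - w‖^3 := by
    intro r
    rw [hF, hu]
    simp only [norm_div, norm_pow]
    rw [Complex.norm_real, Real.norm_eq_abs, abs_of_pos hε0]
  -- rotation
  have hrot : ∀ r : ℝ, ‖circ r θ - w‖ = ‖(r:ℂ) * Complex.exp (s*Complex.I) - (1+ε)‖ := by
    intro r
    have he : Complex.exp (a*Complex.I) * Complex.exp ((s:ℂ)*Complex.I)
        = Complex.exp ((θ:ℂ)*Complex.I) := by
      rw [← Complex.exp_add]; congr 1; push_cast [hs]; ring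
    have h1 : circ r θ - w
        = Complex.exp (a*Complex.I) * ((r:ℂ) * Complex.exp (s*Complex.I) - (1+ε)) := by
      rw [mul_sub, ← mul_assoc, mul_comm (Complex.exp (a*Complex.I)) (r:ℂ), mul_assoc, he]
      simp [circ, hw]
      ring
    rw [h1, norm_mul, Complex.norm_exp_ofReal_mul_I, one_mul]
  have hre : ∀ r : ℝ, ((r:ℂ) * Complex.exp (s*Complex.I) - (1+ε)).re
      = r * Real.cos s - (1+ε) := by
    intro r
    simp [Complex.exp_ofReal_mul_I_re, Complex.sub_re, Complex.mul_re,
      Complex.exp_ofReal_mul_I_im]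
  have him : ∀ r : ℝ, ((r:ℂ) * Complex.exp (s*Complex.I) - (1+ε)).im
      = r * Real.sin s := by
    intro r
    simp [Complex.exp_ofReal_mul_I_re, Complex.sub_im, Complex.mul_im,
      Complex.exp_ofReal_mul_I_im]
  have hd2 : ∀ r : ℝ, (1+ε) - r * Real.cos s ≤ ‖circ r θ - w‖ := by
    intro r
    rw [hrot]
    calc (1+ε) - r * Real.cos s = -(((r:ℂ) * Complex.exp (s*Complex.I) - (1+ε)).re) := by
          rw [hre]; ring
      _ ≤ |((r:ℂ) * Complex.exp (s*Complex.I) - (1+ε)).re| := neg_le_abs _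
      _ ≤ ‖(r:ℂ) * Complex.exp (s*Complex.I) - (1+ε)‖ := Complex.abs_re_le_norm _
  have hd3 : ∀ r : ℝ, 0 ≤ r → r * |Real.sin s| ≤ ‖circ r θ - w‖ := by
    intro r hr
    rw [hrot]
    calc r * |Real.sin s| = |((r:ℂ) * Complex.exp (s*Complex.I) - (1+ε)).im| := by
          rw [him, abs_mul, abs_of_nonneg hr]
      _ ≤ ‖(r:ℂ) * Complex.exp (s*Complex.I) - (1+ε)‖ := Complex.abs_im_le_norm _
  -- generic pointwise bound
  have hbd : ∀ (p q r : ℝ), 0 < p - q*r → p - q*r ≤ ‖circ r θ - w‖ →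
      F r ≤ ε^2 * ((p - q*r)^3)⁻¹ := by
    intro p q r h0 h1
    rw [hnorm r, div_eq_mul_inv]
    apply mul_le_mul_of_nonneg_left _ (by positivity)
    apply inv_anti₀ (by positivity)
    exact pow_le_pow_left₀ h0.le h1 3
  have hd1 : ∀ r ∈ Icc (0:ℝ) 1, (1+ε) - 1*r ≤ ‖circ r θ - w‖ := by
    intro r hr
    have := hd2 r
    have hc1 : Real.cos s ≤ 1 := Real.cos_le_one s
    nlinarith [hr.1]
  -- integrability of F
  have hFcont : ContinuousOn F (Icc (0:ℝ) 1) := by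
    have : F = fun r => ε^2 / ‖circ r θ - w‖^3 := funext hnorm
    rw [this]
    apply ContinuousOn.div continuousOn_const
    · apply Continuous.continuousOn; fun_prop [circ]
    · intro r hr
      have := hd1 r hr
      have : (0:ℝ) < ‖circ r θ - w‖ := by nlinarith [hr.2]
      positivity
  have hFcont' : ContinuousOn F (Set.uIcc (0:ℝ) 1) := by
    rw [Set.uIcc_of_le zero_le_one]; exact hFcont
  have hInt : IntervalIntegrable F MeasureTheory.volume 0 1 :=
    hFcont'.intervalIntegrable
  clear_value F w s
  constructor
  · -- first bound
    have hpa : (0:ℝ) < (1+ε) - 1*0 := by linarith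
    have hpb : (0:ℝ) < (1+ε) - 1*1 := by linarith
    calc (∫ r in (0:ℝ)..1, F r)
        ≤ ∫ r in (0:ℝ)..1, ε^2 * (((1+ε) - 1*r)^3)⁻¹ := by
          apply intervalIntegral.integral_mono_on zero_le_one hInt (intInt3 hpa hpb _)
          intro r hr
          exact hbd (1+ε) 1 r (linpos hpa hpb (by rwa [Set.uIcc_of_le zero_le_one])) (hd1 r hr)
      _ = ε^2 * ((2*1)⁻¹ * ((((1+ε) - 1*1)^2)⁻¹ - (((1+ε) - 1*0)^2)⁻¹)) := by
          rw [intervalIntegral.integral_const_mul, ftc3 one_ne_zero hpa hpb]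
      _ ≤ 1 := by
          have e1 : (1:ℝ)+ε-1*1 = ε := by ring
          have e0 : (1:ℝ)+ε-1*0 = 1+ε := by ring
          rw [e1, e0]
          have h2 : (0:ℝ) ≤ ((1+ε)^2)⁻¹ := by positivity
          have hx : ε^2 * (ε^2)⁻¹ = 1 := mul_inv_cancel₀ (by positivity)
          nlinarith [mul_nonneg (sq_nonneg ε) h2]
  · -- second bound
    intro hθa
    have hsne : s ≠ 0 := by rw [hs]; exact sub_ne_zero.2 hθa
    have ht0 : 0 < |s| := abs_pos.2 hsne
    have htπ : |s| ≤ Real.pi := hθ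
    have hsin_abs : |Real.sin s| = Real.sin |s| := by
      rcases le_or_gt 0 s with h|h
      · rw [abs_of_nonneg h, abs_of_nonneg (Real.sin_nonneg_of_nonneg_of_le_pi h
          (by rwa [abs_of_nonneg h] at htπ))]
      · have hnn : 0 ≤ Real.sin (-s) := Real.sin_nonneg_of_nonneg_of_le_pi (by linarith)
          (by rwa [abs_of_neg h] at htπ)
        rw [Real.sin_neg] at hnn
        rw [abs_of_neg h, Real.sin_neg, abs_of_nonpos (by linarith)]
    rcases le_or_gt |s| 1 with hts|hts
    · -- small t
      set t := |s| with htdef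
      clear_value t
      obtain ⟨c, hc⟩ : ∃ c : ℝ, c = 25*t/57 := ⟨_, rfl⟩
      have hc0 : 0 < c := by rw [hc]; positivity
      have hc1 : c ≤ 25/57 := by rw [hc]; nlinarith
      have hsinlb : 25/32 * t ≤ Real.sin t := by
        have hb := Real.sin_bound (x := t) (by rwa [abs_of_pos ht0])
        rw [abs_of_pos ht0, abs_le] at hb
        have e3 : t^3 ≤ t := by nlinarith [mul_nonneg (mul_nonneg ht0.le (sub_nonneg.2 hts)) (by linarith : (0:ℝ) ≤ 1 + t)]
        have e4 : t^4 ≤ t := by nlinarith [e3, mul_le_mul_of_nonneg_left e3 ht0.le, sq_nonneg t]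
        nlinarith [hb.1, mul_le_mul_of_nonneg_left e4 ht0.le, mul_le_mul_of_nonneg_left hts ht0.le]
      -- split
      have hsub1 : Set.uIcc (0:ℝ) (1-c) ⊆ Set.uIcc (0:ℝ) 1 := by
        apply Set.uIcc_subset_uIcc <;> rw [Set.uIcc_of_le zero_le_one] <;>
          constructor <;> linarith
      have hsub2 : Set.uIcc (1-c) (1:ℝ) ⊆ Set.uIcc (0:ℝ) 1 := by
        apply Set.uIcc_subset_uIcc <;> rw [Set.uIcc_of_le zero_le_one] <;>
          constructor <;> linarith
      have hI1 := hInt.mono_set hsub1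
      have hI2 := hInt.mono_set hsub2
      have hsplit : (∫ r in (0:ℝ)..1, F r)
          = (∫ r in (0:ℝ)..(1-c), F r) + ∫ r in (1-c)..(1:ℝ), F r :=
        (intervalIntegral.integral_add_adjacent_intervals hI1 hI2).symm
      have hpa : (0:ℝ) < (1+ε) - 1*0 := by linarith
      have hpb' : (0:ℝ) < (1+ε) - 1*(1-c) := by linarith
      -- piece 1
      have hp1 : (∫ r in (0:ℝ)..(1-c), F r) ≤ ε^2 * (2⁻¹ * (c^2)⁻¹) := by
        calc (∫ r in (0:ℝ)..(1-c), F r)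
            ≤ ∫ r in (0:ℝ)..(1-c), ε^2 * (((1+ε) - 1*r)^3)⁻¹ := by
              apply intervalIntegral.integral_mono_on (by linarith) hI1 (intInt3 hpa hpb' _)
              intro r hr
              have hr' : r ∈ Icc (0:ℝ) 1 := ⟨hr.1, by linarith [hr.2]⟩
              exact hbd (1+ε) 1 r (linpos hpa hpb'
                (by rw [Set.uIcc_of_le (by linarith : (0:ℝ) ≤ 1-c)]; exact hr)) (hd1 r hr')
          _ = ε^2 * ((2*1)⁻¹ * ((((1+ε) - 1*(1-c))^2)⁻¹ - (((1+ε) - 1*0)^2)⁻¹)) := by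
              rw [intervalIntegral.integral_const_mul, ftc3 one_ne_zero hpa hpb']
          _ ≤ ε^2 * (2⁻¹ * (c^2)⁻¹) := by
              have e1 : (1:ℝ)+ε-1*(1-c) = ε+c := by ring
              have e0 : (1:ℝ)+ε-1*0 = 1+ε := by ring
              rw [e1, e0]
              have h5 : ((ε+c)^2)⁻¹ ≤ (c^2)⁻¹ := by
                apply inv_anti₀ (by positivity); nlinarith
              have h6 : (0:ℝ) ≤ ((1+ε)^2)⁻¹ := by positivity
              nlinarith [mul_le_mul_of_nonneg_left h5 (sq_nonneg ε),
                mul_nonneg (sq_nonneg ε) h6]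
      -- piece 2
      have hdc : ∀ r ∈ Icc (1-c) (1:ℝ), c ≤ ‖circ r θ - w‖ := by
        intro r hr
        have h7 := hd3 r (by linarith [hr.1])
        rw [hsin_abs] at h7
        have h8 : (1-c) * (25/32*t) ≤ r * Real.sin t := by
          apply mul_le_mul hr.1 hsinlb (by positivity) (by linarith [hr.1])
        have h9 : c ≤ (1-c) * (25/32*t) := by rw [hc]; nlinarith
        linarith
      have hp2 : (∫ r in (1-c)..(1:ℝ), F r) ≤ ε^2 * (c^2)⁻¹ := by
        calc (∫ r in (1-c)..(1:ℝ), F r)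
            ≤ ∫ r in (1-c)..(1:ℝ), ε^2 * (c^3)⁻¹ := by
              apply intervalIntegral.integral_mono_on (by linarith) hI2
                intervalIntegrable_const
              intro r hr
              rw [hnorm r, div_eq_mul_inv]
              apply mul_le_mul_of_nonneg_left _ (by positivity)
              apply inv_anti₀ (by positivity)
              exact pow_le_pow_left₀ hc0.le (hdc r hr) 3
          _ = (1 - (1-c)) • (ε^2 * (c^3)⁻¹) := intervalIntegral.integral_const _
          _ = ε^2 * (c^2)⁻¹ := by
              rw [smul_eq_mul]
              rw [show (1:ℝ) - (1-c) = c by ring]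
              rw [show c^3 = c * c^2 by ring]
              field_simp
      -- combine
      have hfinal : ε^2 * (2⁻¹ * (c^2)⁻¹) + ε^2 * (c^2)⁻¹ ≤ 8*ε^2/t^2 := by
        have hcc : (c^2)⁻¹ = 3249/625 * (t^2)⁻¹ := by
          rw [hc, show (25*t/57)^2 = 625/3249 * t^2 by ring, mul_inv]
          norm_num
        have h10 : (0:ℝ) ≤ ε^2 * (t^2)⁻¹ := by positivity
        calc ε^2 * (2⁻¹ * (c^2)⁻¹) + ε^2 * (c^2)⁻¹
            = (9747/1250) * (ε^2 * (t^2)⁻¹) := by rw [hcc]; ring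
          _ ≤ 8 * (ε^2 * (t^2)⁻¹) := by linarith
          _ = 8*ε^2/t^2 := by ring
      calc (∫ r in (0:ℝ)..1, F r) = _ := hsplit
        _ ≤ ε^2 * (2⁻¹ * (c^2)⁻¹) + ε^2 * (c^2)⁻¹ := add_le_add hp1 hp2
        _ ≤ 8*ε^2/t^2 := hfinal
    · -- large t
      set t := |s| with htdef
      clear_value t
      obtain ⟨q, hq⟩ : ∃ q : ℝ, q = Real.cos s := ⟨_, rfl⟩
      have hqt : Real.cos t = q := by rw [htdef, Real.cos_abs, hq]
      have hcos1 : Real.cos 1 ≤ 53/96 := by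
        have hb := Real.cos_bound (x := 1) (by norm_num)
        rw [abs_le] at hb
        have := hb.2
        norm_num at this ⊢
        linarith
      have hq1 : q ≤ 53/96 := by
        rw [← hqt]
        calc Real.cos t ≤ Real.cos 1 :=
              Real.cos_le_cos_of_nonneg_of_le_pi (by norm_num) htπ hts.le
          _ ≤ 53/96 := hcos1
      have hqm1 : -1 ≤ q := hq ▸ Real.neg_one_le_cos s
      have hJ : 2/Real.pi^2 * t^2 ≤ 1 - q := by
        have := Real.cos_le_one_sub_mul_cos_sq (x := t) (by rwa [abs_of_pos ht0])
        rw [hqt] at this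
        linarith
      have hπ2u : Real.pi^2 ≤ 9.86961 := by nlinarith [Real.pi_lt_d6, Real.pi_gt_d6]
      have hπ2l : (9.8695:ℝ) ≤ Real.pi^2 := by nlinarith [Real.pi_gt_d6]
      have ht2 : 2*t^2 ≤ Real.pi^2 * (1-q) := by
        have hπ0 : (0:ℝ) < Real.pi^2 := by positivity
        have := mul_le_mul_of_nonneg_left hJ hπ0.le
        rw [mul_comm (2/Real.pi^2) (t^2)] at this
        calc 2*t^2 = Real.pi^2 * (t^2 * (2/Real.pi^2)) := by field_simp
          _ ≤ Real.pi^2 * (1-q) := this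
      have h1q : (0:ℝ) < 1 - q := by linarith
      have hpa : (0:ℝ) < 1 - q*0 := by linarith
      have hpb : (0:ℝ) < 1 - q*1 := by linarith
      have hdq : ∀ r ∈ Icc (0:ℝ) 1, 1 - q*r ≤ ‖circ r θ - w‖ := by
        intro r hr
        have h1 : (1:ℝ) - q*r ≤ (1+ε) - r * Real.cos s := by
          rw [← hq]; linarith [hr.1, hr.2]
        linarith [hd2 r]
      have hmain : (∫ r in (0:ℝ)..1, F r) ≤ ∫ r in (0:ℝ)..1, ε^2 * ((1 - q*r)^3)⁻¹ := by
        apply intervalIntegral.integral_mono_on zero_le_one hInt (intInt3 hpa hpb _)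
        intro r hr
        exact hbd 1 q r (linpos hpa hpb (by rwa [Set.uIcc_of_le zero_le_one])) (hdq r hr)
      rcases eq_or_ne q 0 with hq0|hq0
      · -- q = 0
        have hcv : (∫ r in (0:ℝ)..1, ε^2 * ((1 - q*r)^3)⁻¹) = ε^2 := by
          rw [hq0]
          simp only [zero_mul, sub_zero, one_pow, inv_one, mul_one,
            intervalIntegral.integral_const, smul_eq_mul]
          ring
        rw [hcv] at hmain
        have ht8 : t^2 ≤ 8 := by
          rw [hq0] at hJ
          nlinarith
        calc (∫ r in (0:ℝ)..1, F r) ≤ ε^2 := hmain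
          _ ≤ 8*ε^2/t^2 := by
            rw [le_div_iff₀ (by positivity)]
            nlinarith
      · -- q ≠ 0
        have hval : (∫ r in (0:ℝ)..1, ε^2 * ((1 - q*r)^3)⁻¹)
            = ε^2 * ((2*q)⁻¹ * (((1 - q*1)^2)⁻¹ - ((1 - q*0)^2)⁻¹)) := by
          rw [intervalIntegral.integral_const_mul, ftc3 hq0 hpa hpb]
        have heq : (2*q)⁻¹ * (((1 - q*1)^2)⁻¹ - ((1 - q*0)^2)⁻¹) = (2-q)/(2*(1-q)^2) := by
          have e1 : (1:ℝ) - q*1 = 1-q := by ring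
          have e0 : (1:ℝ) - q*0 = 1 := by ring
          rw [e1, e0]
          field_simp
          ring
        have hkey : (2-q)/(2*(1-q)^2) ≤ 8/t^2 := by
          rw [div_le_div_iff₀ (by positivity) (by positivity)]
          have h2q : (0:ℝ) < 2 - q := by linarith
          have hmm : (2-q)*(2*t^2) ≤ (2-q)*(Real.pi^2*(1-q)) :=
            mul_le_mul_of_nonneg_left ht2 h2q.le
          nlinarith [mul_nonneg (sub_nonneg.2 hq1) h1q.le,
            mul_le_mul_of_nonneg_left hπ2u (mul_nonneg h2q.le h1q.le)]
        calc (∫ r in (0:ℝ)..1, F r)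
            ≤ ε^2 * ((2*q)⁻¹ * (((1 - q*1)^2)⁻¹ - ((1 - q*0)^2)⁻¹)) := hval ▸ hmain
          _ = ε^2 * ((2-q)/(2*(1-q)^2)) := by rw [heq]
          _ ≤ ε^2 * (8/t^2) := by
              apply mul_le_mul_of_nonneg_left hkey (by positivity)
          _ = 8*ε^2/t^2 := by ring
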